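/- Let C be a completely pseudo-regular code in a finite simple connected graph Γ. Then the dual degree of the k-th subconstituent satisfies d_{C_k} ≥ max{k, d_C − k}, and consequently the C-local predistance polynomial p_k vanishes at most at min{k, d_C − k} distinct eigenvalues of the C-local spectrum. -/

import Mathlib

open Finset Polynomial BigOperators
open scoped Classical

noncomputable section

/-- The eigenspace of a real matrix `A` (viewed as an operator on Euclidean space)
for the value `μ`. -/
def eigSp {n : ℕ} (A : Matrix (Fin n) (Fin n) ℝ) (μ : ℝ) :
    Submodule ℝ (EuclideanSpace ℝ (Fin n)) :=
  Module.End.eigenspace (Matrix.toEuclideanLin A) μ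

/-- Orthogonal projection onto the `μ`-eigenspace of `A`. -/
def eigProj {n : ℕ} (A : Matrix (Fin n) (Fin n) ℝ) (μ : ℝ) (v : EuclideanSpace ℝ (Fin n)) :
    EuclideanSpace ℝ (Fin n) :=
  ((eigSp A μ).orthogonalProjectionOnto v : EuclideanSpace ℝ (Fin n))

/-- The weighted characteristic vector `ρS = Σ_{i∈S} ν_i e_i`. -/
def rho {n : ℕ} (ν : EuclideanSpace ℝ (Fin n)) (S : Finset (Fin n)) :
    EuclideanSpace ℝ (Fin n) :=
  WithLp.toLp 2 (fun i => if i ∈ S then ν i else 0)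

/-- The unit vector `e_S = ρS / ‖ρS‖`. -/
def unitVec {n : ℕ} (ν : EuclideanSpace ℝ (Fin n)) (S : Finset (Fin n)) :
    EuclideanSpace ℝ (Fin n) :=
  (‖rho ν S‖)⁻¹ • rho ν S

/-- The `S`-local multiplicity of `μ`: `m_S(μ) = ‖E_μ e_S‖²`. -/
def mloc {n : ℕ} (A : Matrix (Fin n) (Fin n) ℝ) (ν : EuclideanSpace ℝ (Fin n))
    (S : Finset (Fin n)) (μ : ℝ) : ℝ :=
  ‖eigProj A μ (unitVec ν S)‖ ^ 2

/-- The `S`-local spectrum: the set of `μ` whose eigenspace sees `ρS`. -/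
def evloc {n : ℕ} (A : Matrix (Fin n) (Fin n) ℝ) (ν : EuclideanSpace ℝ (Fin n))
    (S : Finset (Fin n)) : Set ℝ :=
  {μ | eigProj A μ (rho ν S) ≠ 0}

/-- Distance from a vertex `i` to a set of vertices `S`. -/
def dSet {n : ℕ} (G : SimpleGraph (Fin n)) (S : Finset (Fin n)) (i : Fin n) : ℕ :=
  sInf {k | ∃ j ∈ S, G.dist i j = k}

/-- Eccentricity (covering radius) of a vertex set `S`. -/
def eccS {n : ℕ} (G : SimpleGraph (Fin n)) (S : Finset (Fin n)) : ℕ :=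
  Finset.univ.sup (dSet G S)

/-- The `k`-th subconstituent `S_k = {i : dist(i,S) = k}`. -/
def subcons {n : ℕ} (G : SimpleGraph (Fin n)) (S : Finset (Fin n)) (k : ℕ) :
    Finset (Fin n) :=
  Finset.univ.filter (fun i => dSet G S i = k)

/-- `p(A)·v` for a polynomial `p`, a matrix `A` and a Euclidean vector `v`. -/
def aevalVec {n : ℕ} (A : Matrix (Fin n) (Fin n) ℝ) (p : Polynomial ℝ)
    (v : EuclideanSpace ℝ (Fin n)) : EuclideanSpace ℝ (Fin n) :=
  WithLp.toLp 2 ((Polynomial.aeval A p).mulVec v)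

/-- Moment-like parameter `π_l = ∏_{h≠l} |μ_l − μ_h|` for an enumeration `μ`. -/
def piC {d : ℕ} (μ : Fin (d + 1) → ℝ) (l : Fin (d + 1)) : ℝ :=
  ∏ h ∈ Finset.univ.erase l, |μ l - μ h|

/-! ### Auxiliary lemmas -/




lemma aevalVec_eq_aeval {n : ℕ} (A : Matrix (Fin n) (Fin n) ℝ) (p : Polynomial ℝ)
    (v : EuclideanSpace ℝ (Fin n)) :
    aevalVec A p v = (Polynomial.aeval (Matrix.toEuclideanLin A) p) v := by
  unfold aevalVec
  induction p using Polynomial.induction_on generalizing v with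
  | C a =>
      rw [aeval_C, aeval_C, Algebra.algebraMap_eq_smul_one, Algebra.algebraMap_eq_smul_one,
        Matrix.smul_mulVec, Matrix.one_mulVec, LinearMap.smul_apply, Module.End.one_apply]
      rfl
  | add p q hp hq =>
      simp only [map_add, Matrix.add_mulVec, LinearMap.add_apply, WithLp.toLp_add, hp, hq]
  | monomial m a ih =>
      have h2 : C a * X ^ (m + 1) = C a * X ^ m * X := by ring
      have eA : (aeval A) (C a * X ^ m * X) = (aeval A) (C a * X ^ m) * A := by
        rw [map_mul, aeval_X]
      have eT : (aeval (Matrix.toEuclideanLin A)) (C a * X ^ m * X)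
          = (aeval (Matrix.toEuclideanLin A)) (C a * X ^ m) * (Matrix.toEuclideanLin A) := by
        rw [map_mul, aeval_X]
      rw [h2, eA, eT, ← Matrix.mulVec_mulVec, Module.End.mul_apply]
      exact ih (Matrix.toEuclideanLin A v)



section spectral
variable {n : ℕ} {A : Matrix (Fin n) (Fin n) ℝ}

lemma aeval_eigen {μ : ℝ} {u : EuclideanSpace ℝ (Fin n)} (hu : u ∈ eigSp A μ) (p : Polynomial ℝ) :
    (Polynomial.aeval (Matrix.toEuclideanLin A) p) u = p.eval μ • u := by
  have hu' : Matrix.toEuclideanLin A u = μ • u := Module.End.mem_eigenspace_iff.mp hu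
  induction p using Polynomial.induction_on with
  | C a => simp [Algebra.algebraMap_eq_smul_one]
  | add p q hp hq => simp [map_add, LinearMap.add_apply, hp, hq, add_smul]
  | monomial m a ih =>
      have h2 : C a * X ^ (m + 1) = X * (C a * X ^ m) := by ring
      rw [h2, map_mul, aeval_X, Module.End.mul_apply, ih, map_smul, hu', smul_smul]
      congr 1
      simp [eval_mul]
      ring

lemma aeval_isSymmetric (hsym : (Matrix.toEuclideanLin A).IsSymmetric) (p : Polynomial ℝ) :
    (Polynomial.aeval (Matrix.toEuclideanLin A) p).IsSymmetric := by
  induction p using Polynomial.induction_on with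
  | C a =>
      intro x y
      simp only [aeval_C, Algebra.algebraMap_eq_smul_one, LinearMap.smul_apply,
        Module.End.one_apply, real_inner_smul_left, real_inner_smul_right]
  | add p q hp hq =>
      intro x y
      simp [map_add, LinearMap.add_apply, inner_add_left, inner_add_right, hp x y, hq x y]
  | monomial m a ih =>
      have eT : (aeval (Matrix.toEuclideanLin A)) (C a * X ^ (m+1))
          = (aeval (Matrix.toEuclideanLin A)) (C a * X ^ m) * (Matrix.toEuclideanLin A) := by
        rw [show C a * X ^ (m + 1) = C a * X ^ m * X by ring, map_mul, aeval_X]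
      have comm : Matrix.toEuclideanLin A * (aeval (Matrix.toEuclideanLin A)) (C a * X ^ m)
          = (aeval (Matrix.toEuclideanLin A)) (C a * X ^ m) * Matrix.toEuclideanLin A := by
        have h := (Commute.all X (C a * X ^ m)).map
          (aeval (Matrix.toEuclideanLin A) : Polynomial ℝ →ₐ[ℝ] _)
        simpa [Commute, SemiconjBy, aeval_X] using h
      intro x y
      rw [eT, Module.End.mul_apply, Module.End.mul_apply, ih, hsym, ← Module.End.mul_apply, comm, Module.End.mul_apply]

lemma eigProj_aeval (hsym : (Matrix.toEuclideanLin A).IsSymmetric) (p : Polynomial ℝ)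
    (v : EuclideanSpace ℝ (Fin n)) (μ : ℝ) :
    eigProj A μ ((Polynomial.aeval (Matrix.toEuclideanLin A) p) v)
      = p.eval μ • eigProj A μ v := by
  unfold eigProj
  simp only [Submodule.coe_orthogonalProjectionOnto_apply]
  apply Submodule.eq_starProjection_of_mem_of_inner_eq_zero
  · exact Submodule.smul_mem _ _ (Submodule.starProjection_apply_mem _ _)
  · intro w hw
    have h1 : (inner ℝ ((Polynomial.aeval (Matrix.toEuclideanLin A) p) v) w : ℝ)
        = p.eval μ * inner ℝ v w := by
      rw [aeval_isSymmetric hsym p v w, aeval_eigen hw, real_inner_smul_right]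
    rw [inner_sub_left, h1, real_inner_smul_left, ← mul_sub, ← inner_sub_left,
      Submodule.starProjection_inner_eq_zero v w hw, mul_zero]

def eigBasis (hsym : (Matrix.toEuclideanLin A).IsSymmetric) :
    OrthonormalBasis (Fin n) ℝ (EuclideanSpace ℝ (Fin n)) :=
  hsym.eigenvectorBasis finrank_euclideanSpace_fin

def eigVal (hsym : (Matrix.toEuclideanLin A).IsSymmetric) (i : Fin n) : ℝ :=
  hsym.eigenvalues finrank_euclideanSpace_fin i

lemma basis_mem_eigSp (hsym : (Matrix.toEuclideanLin A).IsSymmetric) (i : Fin n) :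
    eigBasis hsym i ∈ eigSp A (eigVal hsym i) :=
  (hsym.hasEigenvector_eigenvectorBasis finrank_euclideanSpace_fin i).1

lemma inner_basis_eigen_zero (hsym : (Matrix.toEuclideanLin A).IsSymmetric) (i : Fin n)
    {μ : ℝ} {u : EuclideanSpace ℝ (Fin n)}
    (hu : u ∈ eigSp A μ) (hne : eigVal hsym i ≠ μ) : (inner ℝ (eigBasis hsym i) u : ℝ) = 0 := by
  have h1 : (inner ℝ (Matrix.toEuclideanLin A (eigBasis hsym i)) u : ℝ)
      = inner ℝ (eigBasis hsym i) (Matrix.toEuclideanLin A u) := hsym _ _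
  rw [Module.End.mem_eigenspace_iff.mp (basis_mem_eigSp hsym i),
    Module.End.mem_eigenspace_iff.mp hu,
    real_inner_smul_left, real_inner_smul_right] at h1
  have hne' := sub_ne_zero.mpr hne
  have h2 : (eigVal hsym i - μ) * (inner ℝ (eigBasis hsym i) u : ℝ) = 0 := by linear_combination h1
  rcases mul_eq_zero.mp h2 with h | h
  · exact absurd h hne'
  · exact h

lemma eigProj_eq_sum (hsym : (Matrix.toEuclideanLin A).IsSymmetric) (μ : ℝ)
    (v : EuclideanSpace ℝ (Fin n)) :
    eigProj A μ v = ∑ i ∈ Finset.univ.filter (fun i => eigVal hsym i = μ),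
      (inner ℝ (eigBasis hsym i) v : ℝ) • eigBasis hsym i := by
  unfold eigProj
  simp only [Submodule.coe_orthogonalProjectionOnto_apply]
  apply Submodule.eq_starProjection_of_mem_of_inner_eq_zero
  · apply Submodule.sum_mem
    intro i hi
    apply Submodule.smul_mem
    have := basis_mem_eigSp hsym i
    rwa [(Finset.mem_filter.mp hi).2] at this
  · intro w hw
    have hv : v = ∑ i, (inner ℝ (eigBasis hsym i) v : ℝ) • eigBasis hsym i :=
      (OrthonormalBasis.sum_repr' _ v).symm
    rw [inner_sub_left]
    nth_rewrite 1 [hv]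
    rw [← Finset.sum_filter_add_sum_filter_not Finset.univ (fun i => eigVal hsym i = μ)
      (fun i => (inner ℝ (eigBasis hsym i) v : ℝ) • eigBasis hsym i),
      inner_add_left, add_sub_cancel_left, sum_inner]
    apply Finset.sum_eq_zero
    intro i hi
    rw [real_inner_smul_left, inner_basis_eigen_zero hsym i hw (Finset.mem_filter.mp hi).2,
      mul_zero]

lemma inner_eq_zero_of_eigProj_eq_zero (hsym : (Matrix.toEuclideanLin A).IsSymmetric)
    {μ : ℝ} {v : EuclideanSpace ℝ (Fin n)}
    (h : eigProj A μ v = 0) (i : Fin n) (hi : eigVal hsym i = μ) :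
    (inner ℝ (eigBasis hsym i) v : ℝ) = 0 := by
  have h0 : (eigSp A μ).orthogonalProjectionOnto v = 0 := by
    ext1; exact h
  have hv : v ∈ (eigSp A μ)ᗮ := Submodule.orthogonalProjectionOnto_eq_zero_iff.mp h0
  have hb := basis_mem_eigSp hsym i
  rw [hi] at hb
  exact (Submodule.mem_orthogonal _ _).mp hv _ hb

lemma eigProj_eq_zero_of_not_eigenvalue (hsym : (Matrix.toEuclideanLin A).IsSymmetric)
    {μ : ℝ} (hμ : ∀ i, eigVal hsym i ≠ μ)
    (v : EuclideanSpace ℝ (Fin n)) : eigProj A μ v = 0 := by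
  rw [eigProj_eq_sum hsym]
  rw [Finset.filter_false_of_mem (fun i _ => hμ i), Finset.sum_empty]

lemma aeval_annihilates (hsym : (Matrix.toEuclideanLin A).IsSymmetric)
    (v : EuclideanSpace ℝ (Fin n)) (q : Polynomial ℝ)
    (hq : ∀ μ : ℝ, eigProj A μ v ≠ 0 → q.eval μ = 0) :
    (Polynomial.aeval (Matrix.toEuclideanLin A) q) v = 0 := by
  nth_rewrite 1 [← OrthonormalBasis.sum_repr' (eigBasis hsym) v]
  rw [map_sum]
  apply Finset.sum_eq_zero
  intro i _
  rw [map_smul, aeval_eigen (basis_mem_eigSp hsym i)]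
  by_cases h : eigProj A (eigVal hsym i) v = 0
  · rw [inner_eq_zero_of_eigProj_eq_zero hsym h i rfl, zero_smul]
  · rw [hq _ h, zero_smul, smul_zero]

end spectral




section graph
variable {n : ℕ} {G : SimpleGraph (Fin n)} {S : Finset (Fin n)}

lemma dSet_set_nonempty (hS : S.Nonempty) (i : Fin n) :
    {k | ∃ j ∈ S, G.dist i j = k}.Nonempty := by
  obtain ⟨j, hj⟩ := hS
  exact ⟨G.dist i j, j, hj, rfl⟩

lemma dSet_exists (hS : S.Nonempty) (i : Fin n) :
    ∃ j ∈ S, G.dist i j = dSet G S i :=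
  Nat.sInf_mem (dSet_set_nonempty hS i)

lemma dSet_le (i : Fin n) {j : Fin n} (hj : j ∈ S) : dSet G S i ≤ G.dist i j :=
  Nat.sInf_le ⟨j, hj, rfl⟩

lemma dSet_le_eccS (i : Fin n) : dSet G S i ≤ eccS G S :=
  Finset.le_sup (Finset.mem_univ i)

lemma dSet_triangle (hconn : G.Connected) (hS : S.Nonempty) (i j : Fin n) :
    dSet G S i ≤ G.dist i j + dSet G S j := by
  obtain ⟨c, hc, hdc⟩ := dSet_exists (G := G) hS j
  calc dSet G S i ≤ G.dist i c := dSet_le i hc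
    _ ≤ G.dist i j + G.dist j c := hconn.dist_triangle
    _ = G.dist i j + dSet G S j := by rw [hdc]

lemma dSet_zero_of_mem {i : Fin n} (hi : i ∈ S) : dSet G S i = 0 := by
  have h := dSet_le (G := G) i hi
  rw [SimpleGraph.dist_self] at h
  omega

lemma exists_dSet_eq (hn : 0 < n) (hconn : G.Connected) (hS : S.Nonempty)
    {k : ℕ} (hk : k ≤ eccS G S) : ∃ i, dSet G S i = k := by
  -- step down from a vertex at distance m+1 to one at distance m
  have step : ∀ m : ℕ, (∃ i, dSet G S i = m + 1) → ∃ i, dSet G S i = m := by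
    rintro m ⟨i, hi⟩
    obtain ⟨c, hc, hdc⟩ := dSet_exists (G := G) hS i
    rw [hi] at hdc
    have hne : i ≠ c := by
      intro h; rw [h] at hdc; simp [SimpleGraph.dist_self] at hdc
    obtain ⟨p, hp⟩ := hconn.exists_walk_length_eq_dist i c
    rw [hdc] at hp
    cases p with
    | nil => simp at hp
    | @cons _ w _ hadj q =>
        refine ⟨w, le_antisymm ?_ ?_⟩
        · have h1 : G.dist w c ≤ q.length := SimpleGraph.dist_le q
          have h2 : q.length = m := by simpa using hp
          calc dSet G S w ≤ G.dist w c := dSet_le w hc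
            _ ≤ m := by omega
        · have h3 : dSet G S i ≤ G.dist i w + dSet G S w := dSet_triangle hconn hS i w
          have h4 : G.dist i w ≤ 1 := by
            have := SimpleGraph.dist_le (SimpleGraph.Walk.cons hadj SimpleGraph.Walk.nil)
            simpa using this
          omega
  -- top: eccentricity is attained
  obtain ⟨v, -, hv⟩ := Finset.exists_mem_eq_sup Finset.univ
    (Finset.univ_nonempty_iff.mpr (by exact Fin.pos_iff_nonempty.mp hn)) (dSet G S)
  have hv' : dSet G S v = eccS G S := hv.symm
  have down : ∀ j : ℕ, ∃ i, dSet G S i = eccS G S - j := by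
    intro j
    induction j with
    | zero => exact ⟨v, by simpa using hv'⟩
    | succ j ih =>
        by_cases hj : eccS G S ≤ j
        · obtain ⟨i, hi⟩ := ih
          exact ⟨i, by omega⟩
        · obtain ⟨i, hi⟩ := ih
          have : eccS G S - j = (eccS G S - (j+1)) + 1 := by omega
          rw [this] at hi
          obtain ⟨w, hw⟩ := step _ ⟨i, hi⟩
          exact ⟨w, hw⟩
  obtain ⟨i, hi⟩ := down (eccS G S - k)
  exact ⟨i, by omega⟩

lemma subcons_nonempty (hn : 0 < n) (hconn : G.Connected) (hS : S.Nonempty)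
    {k : ℕ} (hk : k ≤ eccS G S) : (subcons G S k).Nonempty := by
  obtain ⟨i, hi⟩ := exists_dSet_eq hn hconn hS hk
  exact ⟨i, by simp [subcons, hi]⟩

lemma dist_ge_of_mem_subcons (hconn : G.Connected) (hS : S.Nonempty) {k : ℕ}
    {c j : Fin n} (hc : c ∈ S) (hj : j ∈ subcons G S k) : k ≤ G.dist c j := by
  have hj' : dSet G S j = k := (Finset.mem_filter.mp hj).2
  have := dSet_le (G := G) j hc
  rw [hj', SimpleGraph.dist_comm] at this
  exact this

-- eccentricity of the subconstituent is at least k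
lemma eccS_subcons_ge_left (hn : 0 < n) (hconn : G.Connected) (hS : S.Nonempty)
    {k : ℕ} (hk : k ≤ eccS G S) : k ≤ eccS G (subcons G S k) := by
  have hS' := hS
  obtain ⟨c, hc⟩ := hS'
  have hsub := subcons_nonempty hn hconn hS hk
  have h1 : k ≤ dSet G (subcons G S k) c := by
    obtain ⟨j, hj, hdj⟩ := dSet_exists (G := G) hsub c
    rw [← hdj]
    exact dist_ge_of_mem_subcons hconn hS hc hj
  exact le_trans h1 (dSet_le_eccS c)

-- eccentricity of the subconstituent is at least eccS G S - k
lemma eccS_subcons_ge_right (hn : 0 < n) (hconn : G.Connected) (hS : S.Nonempty)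
    {k : ℕ} (hk : k ≤ eccS G S) : eccS G S - k ≤ eccS G (subcons G S k) := by
  have hsub := subcons_nonempty hn hconn hS hk
  obtain ⟨v, hv⟩ := exists_dSet_eq hn hconn hS (le_refl (eccS G S))
  have h1 : eccS G S - k ≤ dSet G (subcons G S k) v := by
    obtain ⟨j, hj, hdj⟩ := dSet_exists (G := G) hsub v
    rw [← hdj]
    have hj' : dSet G S j = k := (Finset.mem_filter.mp hj).2
    obtain ⟨c, hc, hdc⟩ := dSet_exists (G := G) hS j
    rw [hj'] at hdc
    have h2 : G.dist v c ≤ G.dist v j + G.dist j c := hconn.dist_triangle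
    have h3 : eccS G S ≤ G.dist v c := by rw [← hv]; exact dSet_le v hc
    omega
  exact le_trans h1 (dSet_le_eccS v)

end graph



section lemA
variable {n : ℕ} {G : SimpleGraph (Fin n)} [DecidableRel G.Adj]
  {ν : EuclideanSpace ℝ (Fin n)} {S : Finset (Fin n)}

lemma adj_isSymmetric : (Matrix.toEuclideanLin (G.adjMatrix ℝ)).IsSymmetric := by
  apply Matrix.isHermitian_iff_isSymmetric.mp
  unfold Matrix.IsHermitian
  ext i j
  simp [Matrix.conjTranspose_apply, SimpleGraph.adjMatrix_apply, SimpleGraph.adj_comm]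

lemma rho_apply (i : Fin n) : rho ν S i = if i ∈ S then ν i else 0 := rfl

lemma rho_nonneg (hν : ∀ i, 0 < ν i) (i : Fin n) : 0 ≤ rho ν S i := by
  rw [rho_apply]; split <;> [exact (hν i).le; exact le_refl 0]

lemma evloc_finite : (evloc (G.adjMatrix ℝ) ν S).Finite := by
  apply Set.Finite.subset (Set.finite_range (eigVal (A := G.adjMatrix ℝ) adj_isSymmetric))
  intro μ hμ
  by_contra hr
  simp only [Set.mem_range, not_exists] at hr
  exact hμ (eigProj_eq_zero_of_not_eigenvalue adj_isSymmetric hr _)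

lemma entry_pow_eq_zero {j : ℕ} {u v : Fin n} (h : j < G.dist u v) :
    (G.adjMatrix ℝ ^ j) u v = 0 := by
  rw [SimpleGraph.adjMatrix_pow_apply_eq_card_walk]
  norm_cast
  rw [Fintype.card_eq_zero_iff]
  constructor
  rintro ⟨p, hp⟩
  have h2 : G.dist u v ≤ j := hp ▸ SimpleGraph.dist_le p
  omega

lemma entry_pow_nonneg (j : ℕ) (u v : Fin n) : 0 ≤ (G.adjMatrix ℝ ^ j) u v := by
  rw [SimpleGraph.adjMatrix_pow_apply_eq_card_walk]
  positivity

lemma entry_pow_dist_pos (hconn : G.Connected) (u v : Fin n) :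
    0 < (G.adjMatrix ℝ ^ (G.dist u v)) u v := by
  rw [SimpleGraph.adjMatrix_pow_apply_eq_card_walk]
  have : Nonempty {p : G.Walk u v // p.length = G.dist u v} := by
    obtain ⟨p, hp⟩ := hconn.exists_walk_length_eq_dist u v
    exact ⟨⟨p, hp⟩⟩
  have := Fintype.card_pos (α := {p : G.Walk u v // p.length = G.dist u v})
  positivity

lemma evloc_card_ge (hn : 0 < n) (hconn : G.Connected) (hν : ∀ i, 0 < ν i)
    (hS : S.Nonempty) : eccS G S + 1 ≤ (evloc (G.adjMatrix ℝ) ν S).ncard := by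
  set A := G.adjMatrix ℝ with hA
  have hsym : (Matrix.toEuclideanLin A).IsSymmetric := adj_isSymmetric
  have hfin : (evloc A ν S).Finite := evloc_finite
  by_contra hcard
  push_neg at hcard
  set F : Finset ℝ := hfin.toFinset with hF
  have hFcard : F.card = (evloc A ν S).ncard :=
    (Set.ncard_eq_toFinset_card _ hfin).symm
  set s : ℕ := F.card with hs
  have hse : s ≤ eccS G S := by omega
  set q : Polynomial ℝ := ∏ μ ∈ F, (X - C μ) with hq
  have hqz : ∀ μ : ℝ, eigProj A μ (rho ν S) ≠ 0 → q.eval μ = 0 := by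
    intro μ hμ
    have hμF : μ ∈ F := by
      rw [hF, Set.Finite.mem_toFinset]
      exact hμ
    rw [hq, eval_prod]
    apply Finset.prod_eq_zero hμF
    simp
  have hzero : (Polynomial.aeval (Matrix.toEuclideanLin A) q) (rho ν S) = 0 :=
    aeval_annihilates hsym _ q hqz
  have hzero' : (Polynomial.aeval A q).mulVec (rho ν S) = 0 := by
    have := aevalVec_eq_aeval A q (rho ν S)
    unfold aevalVec at this
    rw [hzero] at this
    exact congrArg WithLp.ofLp this
  -- q is monic of degree s
  have hqm : q.Monic := monic_prod_of_monic _ _ (fun μ _ => monic_X_sub_C μ)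
  have hqd : q.natDegree = s := by
    rw [hq, natDegree_prod _ _ (fun μ _ => X_sub_C_ne_zero μ)]
    simp [natDegree_X_sub_C]
    exact hs.symm
  rcases Nat.eq_zero_or_pos s with hs0 | hspos
  · -- s = 0 : q = 1, rho = 0, contradiction with ν positive
    have : q = 1 := by
      rw [hq, Finset.card_eq_zero.mp (by omega : F.card = 0), Finset.prod_empty]
    rw [this, map_one, Matrix.one_mulVec] at hzero'
    obtain ⟨c, hc⟩ := hS
    have h := congrFun hzero' c
    rw [rho_apply, if_pos hc] at h
    simp only [Pi.zero_apply] at h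
    exact absurd h (ne_of_gt (hν c))
  · obtain ⟨i0, hi0⟩ := exists_dSet_eq hn hconn hS hse
    set r : Polynomial ℝ := X ^ s - q with hr
    have hAs : (A ^ s).mulVec (rho ν S) =
        (Polynomial.aeval A r).mulVec (rho ν S) + (Polynomial.aeval A q).mulVec (rho ν S) := by
      rw [← Matrix.add_mulVec, ← map_add]
      congr 1
      rw [hr, sub_add_cancel, map_pow, aeval_X]
    -- key: low powers kill rho at i0
    have hkey : ∀ j : ℕ, j < s → ∀ i : Fin n, (A ^ j) i0 i * rho ν S i = 0 := by
      intro j hj i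
      rw [rho_apply]
      by_cases hiS : i ∈ S
      · rw [if_pos hiS]
        have h1 : s ≤ G.dist i0 i := hi0 ▸ dSet_le i0 hiS
        rw [entry_pow_eq_zero (by omega), zero_mul]
      · rw [if_neg hiS, mul_zero]
    -- the r part vanishes at i0
    have hrent : ((Polynomial.aeval A r).mulVec (rho ν S)) i0 = 0 := by
      rcases eq_or_ne r 0 with hr0 | hr0
      · rw [hr0, map_zero, Matrix.zero_mulVec]
        simp
      · have hdeg : r.natDegree < s := by
          have hdlt : r.degree < (X ^ s : Polynomial ℝ).degree := by
            rw [hr]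
            apply degree_sub_lt
            · rw [degree_X_pow, degree_eq_natDegree hqm.ne_zero, hqd]
            · exact pow_ne_zero s X_ne_zero
            · exact (monic_X_pow s).leadingCoeff.trans hqm.leadingCoeff.symm
          rw [degree_X_pow] at hdlt
          exact natDegree_lt_iff_degree_lt hr0 |>.mpr hdlt
        rw [Polynomial.aeval_eq_sum_range' (Nat.lt_of_lt_of_le hdeg (le_refl s))]
        show (∑ i : Fin n, (∑ j ∈ Finset.range s, r.coeff j • A ^ j) i0 i * rho ν S i) = 0
        apply Finset.sum_eq_zero
        intro i _
        have hsumapp : (∑ j ∈ Finset.range s, r.coeff j • A ^ j) i0 i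
            = ∑ j ∈ Finset.range s, r.coeff j * (A ^ j) i0 i := by
          simp [Matrix.sum_apply, Matrix.smul_apply, smul_eq_mul]
        rw [hsumapp, Finset.sum_mul]
        apply Finset.sum_eq_zero
        intro j hj
        rw [mul_assoc, hkey j (Finset.mem_range.mp hj) i, mul_zero]
    -- but the A^s part is positive at i0
    have hpos : 0 < ((A ^ s).mulVec (rho ν S)) i0 := by
      obtain ⟨c, hc, hdc⟩ := dSet_exists (G := G) hS i0
      rw [hi0] at hdc
      show 0 < ∑ i : Fin n, (A ^ s) i0 i * rho ν S i
      apply Finset.sum_pos'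
      · intro i _
        exact mul_nonneg (entry_pow_nonneg s i0 i) (rho_nonneg hν i)
      · refine ⟨c, Finset.mem_univ c, ?_⟩
        have h1 : 0 < (A ^ s) i0 c := by
          have := entry_pow_dist_pos (G := G) hconn i0 c
          rw [hdc] at this
          exact this
        have h2 : 0 < rho ν S c := by
          rw [rho_apply, if_pos hc]; exact hν c
        exact mul_pos h1 h2
    rw [hAs] at hpos
    have hq0 : (Polynomial.aeval A q).mulVec (rho ν S) i0 = 0 := by
      have h := congrFun hzero' i0
      simpa using h
    have hzero2 : ((Polynomial.aeval A r).mulVec (rho ν S)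
        + (Polynomial.aeval A q).mulVec (rho ν S)) i0 = 0 := by
      show (Polynomial.aeval A r).mulVec (rho ν S) i0
        + (Polynomial.aeval A q).mulVec (rho ν S) i0 = 0
      rw [hrent, hq0, add_zero]
    rw [hzero2] at hpos
    exact lt_irrefl 0 hpos

end lemA


theorem subconstituent_dual_degree_bound {n : ℕ} (hn : 0 < n) (G : SimpleGraph (Fin n)) [DecidableRel G.Adj]
    (hconn : G.Connected)
    (ν : EuclideanSpace ℝ (Fin n)) (hν : ∀ i, 0 < ν i) (lam0 : ℝ)
    (hPerron : (G.adjMatrix ℝ).mulVec ν = lam0 • ν)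
    (C : Finset (Fin n)) (hC : C.Nonempty)
    (d : ℕ) (hd : d + 1 = (evloc (G.adjMatrix ℝ) ν C).ncard)
    (p : ℕ → Polynomial ℝ)
    (hdeg : ∀ k ≤ d, (p k).natDegree = k)
    (horth : ∀ k ≤ d, ∀ h ≤ d, k ≠ h →
      (inner ℝ (aevalVec (G.adjMatrix ℝ) (p k) (unitVec ν C))
             (aevalVec (G.adjMatrix ℝ) (p h) (unitVec ν C)) : ℝ) = 0)
    (hnorm : ∀ k ≤ d,
      (inner ℝ (aevalVec (G.adjMatrix ℝ) (p k) (unitVec ν C))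
             (aevalVec (G.adjMatrix ℝ) (p k) (unitVec ν C)) : ℝ) = (p k).eval lam0)
    (hcode : ∀ k ≤ eccS G C, rho ν (subcons G C k) = aevalVec (G.adjMatrix ℝ) (p k) (rho ν C))
    (hext : eccS G C = d) :
    ∀ k ≤ eccS G C,
      max k (d - k) + 1 ≤ (evloc (G.adjMatrix ℝ) ν (subcons G C k)).ncard ∧
      ((evloc (G.adjMatrix ℝ) ν C) ∩ {x : ℝ | (p k).eval x = 0}).ncard
        ≤ min k (d - k) := by
  intro k hk
  set A := G.adjMatrix ℝ with hA
  have hsym : (Matrix.toEuclideanLin A).IsSymmetric := adj_isSymmetric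
  have hkd : k ≤ d := hext ▸ hk
  have hsubne : (subcons G C k).Nonempty := subcons_nonempty hn hconn hC hk
  -- Claim 1
  have h1 : max k (d - k) + 1 ≤ (evloc A ν (subcons G C k)).ncard := by
    have ha := evloc_card_ge (G := G) (ν := ν) hn hconn hν hsubne
    rw [← hA] at ha
    have hb : k ≤ eccS G (subcons G C k) := eccS_subcons_ge_left hn hconn hC hk
    have hc' : d - k ≤ eccS G (subcons G C k) := by
      have h := eccS_subcons_ge_right hn hconn hC hk
      rwa [hext] at h
    omega
  refine ⟨h1, ?_⟩
  -- Claim 2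
  have hcode' : rho ν (subcons G C k) = aevalVec A (p k) (rho ν C) := hcode k hk
  have hproj : ∀ μ : ℝ, eigProj A μ (rho ν (subcons G C k))
      = (p k).eval μ • eigProj A μ (rho ν C) := by
    intro μ
    rw [hcode', aevalVec_eq_aeval]
    exact eigProj_aeval hsym _ _ μ
  have hset : evloc A ν (subcons G C k)
      = evloc A ν C \ {x : ℝ | (p k).eval x = 0} := by
    ext μ
    constructor
    · intro hμ
      have h : eigProj A μ (rho ν (subcons G C k)) ≠ 0 := hμ
      rw [hproj μ] at h
      rcases smul_ne_zero_iff.mp h with ⟨h1', h2'⟩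
      exact ⟨h2', by simpa using h1'⟩
    · rintro ⟨h1', h2'⟩
      show eigProj A μ (rho ν (subcons G C k)) ≠ 0
      rw [hproj μ]
      exact smul_ne_zero (by simpa using h2') h1'
  have hfinC : (evloc A ν C).Finite := evloc_finite
  have hcount := Set.ncard_inter_add_ncard_diff_eq_ncard (evloc A ν C)
    {x : ℝ | (p k).eval x = 0} hfinC
  rw [← hset] at hcount
  omega
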